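/- Suppose Y : ℝ → ℝ satisfies Y' = -Y² + α. Then y = Y² - 2α/3 satisfies the Schwarz–Kaup–Kupershmidt travelling-wave equation y'''' - 18yy'' + 24y³ - 9(y')² - 8α³/9 = 0. -/

import Mathlib

/-- If `Y` solves the Riccati equation, then `y = Y² - 2α/3` solves the
Schwarz–Kaup–Kupershmidt travelling-wave equation
`y'''' - 18yy'' + 24y³ - 9(y')² - 8α³/9 = 0`. -/
theorem riccati_solves_skk (Y : ℝ → ℝ) (α : ℝ)
    (hY : Differentiable ℝ Y)
    (hRic : ∀ z, deriv Y z = -(Y z) ^ 2 + α)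
    (y : ℝ → ℝ) (hydef : y = fun z => (Y z) ^ 2 - 2 * α / 3) :
    ∀ z, deriv (deriv (deriv (deriv y))) z
      - 18 * y z * deriv (deriv y) z
      + 24 * (y z) ^ 3
      - 9 * (deriv y z) ^ 2 - 8 * α ^ 3 / 9 = 0 := by
  have hYd : ∀ z, HasDerivAt Y (-(Y z) ^ 2 + α) z := fun z => by
    rw [← hRic z]; exact (hY z).hasDerivAt
  -- first derivative
  have h1 : ∀ z, HasDerivAt y (-2 * (Y z) ^ 3 + 2 * α * Y z) z := by
    intro z
    have := ((hYd z).fun_pow 2).sub_const (2 * α / 3)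
    rw [hydef]
    refine this.congr_deriv ?_
    ring
  have e1 : deriv y = fun z => -2 * (Y z) ^ 3 + 2 * α * Y z :=
    funext fun z => (h1 z).deriv
  -- second derivative
  have h2 : ∀ z, HasDerivAt (deriv y)
      (6 * (Y z) ^ 4 - 8 * α * (Y z) ^ 2 + 2 * α ^ 2) z := by
    intro z
    rw [e1]
    have := (((hYd z).fun_pow 3).const_mul (-2)).fun_add ((hYd z).const_mul (2 * α))
    refine this.congr_deriv ?_
    ring
  have e2 : deriv (deriv y) = fun z => 6 * (Y z) ^ 4 - 8 * α * (Y z) ^ 2 + 2 * α ^ 2 :=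
    funext fun z => (h2 z).deriv
  -- third derivative
  have h3 : ∀ z, HasDerivAt (deriv (deriv y))
      (-24 * (Y z) ^ 5 + 40 * α * (Y z) ^ 3 - 16 * α ^ 2 * Y z) z := by
    intro z
    rw [e2]
    have := ((((hYd z).fun_pow 4).const_mul 6).fun_sub (((hYd z).fun_pow 2).const_mul (8 * α))).add_const
      (2 * α ^ 2)
    refine this.congr_deriv ?_
    ring
  have e3 : deriv (deriv (deriv y)) =
      fun z => -24 * (Y z) ^ 5 + 40 * α * (Y z) ^ 3 - 16 * α ^ 2 * Y z :=
    funext fun z => (h3 z).deriv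
  -- fourth derivative
  have h4 : ∀ z, HasDerivAt (deriv (deriv (deriv y)))
      (120 * (Y z) ^ 6 - 240 * α * (Y z) ^ 4 + 136 * α ^ 2 * (Y z) ^ 2 - 16 * α ^ 3) z := by
    intro z
    rw [e3]
    have := ((((hYd z).fun_pow 5).const_mul (-24)).fun_add
      (((hYd z).fun_pow 3).const_mul (40 * α))).fun_sub ((hYd z).const_mul (16 * α ^ 2))
    refine this.congr_deriv ?_
    ring
  have e4 : deriv (deriv (deriv (deriv y))) =
      fun z => 120 * (Y z) ^ 6 - 240 * α * (Y z) ^ 4 + 136 * α ^ 2 * (Y z) ^ 2 - 16 * α ^ 3 :=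
    funext fun z => (h4 z).deriv
  intro z
  rw [e4, e2, e1, hydef]
  ring
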